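/- arXiv:1603.09686 — 9 statements merged into one kernel-verified Lean document; each statement's English description precedes it below -/
import Mathlib

section
/- In a thermodynamic state space with a set M of mechanical states, adiabatic accessibility is transitive: if a ≺ b and b ≺ c then a ≺ c. -/
/-- Adiabatic accessibility: `a ≺ b` iff there are mechanical states `k, l ∈ M`
with `a + k → b + l`. -/
def Adia {St : Type*} (add : St → St → St) (acc : St → St → Prop) (M : Set St)
    (a b : St) : Prop :=
  ∃ k ∈ M, ∃ l ∈ M, acc (add a k) (add b l)

/-- Paper's Axiom 3′: adiabatic accessibility is transitive. -/
theorem adia_trans {St : Type*} (add : St → St → St) (acc : St → St → Prop)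
    (hcomm : ∀ a b, add a b = add b a)
    (hassoc : ∀ a b c, add (add a b) c = add a (add b c))
    (ax2 : ∀ a, acc a a)
    (ax3 : ∀ a b c, acc a b → acc b c → acc a c)
    (ax4 : ∀ a b c, acc a b ↔ acc (add a c) (add b c))
    (M : Set St)
    (hMadd : ∀ k ∈ M, ∀ l ∈ M, add k l ∈ M)
    (hMacc : ∀ k ∈ M, ∀ l ∈ M, acc k l)
    (a b c : St)
    (hab : Adia add acc M a b) (hbc : Adia add acc M b c) :
    Adia add acc M a c := by
  obtain ⟨k1, hk1, l1, hl1, h1⟩ := hab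
  obtain ⟨k2, hk2, l2, hl2, h2⟩ := hbc
  refine ⟨add k1 k2, hMadd _ hk1 _ hk2, add l2 l1, hMadd _ hl2 _ hl1, ?_⟩
  have h1' : acc (add (add a k1) k2) (add (add b l1) k2) := (ax4 _ _ _).mp h1
  have h2' : acc (add (add b k2) l1) (add (add c l2) l1) := (ax4 _ _ _).mp h2
  have e1 : add (add a k1) k2 = add a (add k1 k2) := hassoc _ _ _
  have e2 : add (add b l1) k2 = add (add b k2) l1 := by
    rw [hassoc, hassoc, hcomm l1 k2]
  have e3 : add (add c l2) l1 = add c (add l2 l1) := hassoc _ _ _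
  rw [e1, e2] at h1'
  rw [e3] at h2'
  exact ax3 _ _ _ h1' h2'
end

section
/- In a thermodynamic state space with a set M of mechanical states, a ≺ b if and only if a + c ≺ b + c, for all states a, b, c. -/
/-- Paper's Axiom 4′: `a ≺ b` if and only if `a + c ≺ b + c`. -/
theorem adia_add_iff {St : Type*} (add : St → St → St) (acc : St → St → Prop)
    (hcomm : ∀ a b, add a b = add b a)
    (hassoc : ∀ a b c, add (add a b) c = add a (add b c))
    (ax2 : ∀ a, acc a a)
    (ax3 : ∀ a b c, acc a b → acc b c → acc a c)
    (ax4 : ∀ a b c, acc a b ↔ acc (add a c) (add b c))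
    (M : Set St)
    (hMadd : ∀ k ∈ M, ∀ l ∈ M, add k l ∈ M)
    (hMacc : ∀ k ∈ M, ∀ l ∈ M, acc k l)
    (a b c : St) :
    Adia add acc M a b ↔ Adia add acc M (add a c) (add b c) := by
  have key : ∀ x k : St, add (add x c) k = add (add x k) c := by
    intro x k
    rw [hassoc, hcomm c k, ← hassoc]
  constructor
  · rintro ⟨k, hk, l, hl, h⟩
    exact ⟨k, hk, l, hl, by rw [key, key]; exact (ax4 _ _ c).mp h⟩
  · rintro ⟨k, hk, l, hl, h⟩
    refine ⟨k, hk, l, hl, (ax4 _ _ c).mpr ?_⟩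
    rw [← key, ← key]; exact h
end

section
/- In a thermodynamic state space with a nonempty set M of mechanical states, assume additionally Giles's Axiom 7 for natural accessibility: if there exist states x, y such that n•a + x → n•b + y holds for arbitrarily large positive integers n, then a → b. Then the analogous statement holds for adiabatic accessibility: if there exist states x, y such that n•a + x ≺ n•b + y holds for arbitrarily large positive integers n, then a ≺ b. -/
/-- `copies add a n` is the sum of `n` copies of `a` (for `n ≥ 1`; `copies add a 0` is junk). -/
def copies {S : Type*} (add : S → S → S) (a : S) : ℕ → S
  | 0 => a
  | 1 => a
  | n + 2 => add a (copies add a (n + 1))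

/-- Paper's Axiom 7′: if `n•a + x ≺ n•b + y` holds for arbitrarily large positive
integers `n` (for some states `x, y`), then `a ≺ b`, assuming Giles's Axiom 7 for
natural accessibility. -/
theorem adia_archimedean {St : Type*} (add : St → St → St) (acc : St → St → Prop)
    (hcomm : ∀ a b, add a b = add b a)
    (hassoc : ∀ a b c, add (add a b) c = add a (add b c))
    (ax2 : ∀ a, acc a a)
    (ax3 : ∀ a b c, acc a b → acc b c → acc a c)
    (ax4 : ∀ a b c, acc a b ↔ acc (add a c) (add b c))
    (M : Set St) (hMne : M.Nonempty)
    (hMadd : ∀ k ∈ M, ∀ l ∈ M, add k l ∈ M)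
    (hMacc : ∀ k ∈ M, ∀ l ∈ M, acc k l)
    (ax7 : ∀ a b : St,
      (∃ x y : St, ∀ N : ℕ, ∃ n : ℕ, N ≤ n ∧ 0 < n ∧
        acc (add (copies add a n) x) (add (copies add b n) y)) → acc a b)
    (a b : St)
    (h : ∃ x y : St, ∀ N : ℕ, ∃ n : ℕ, N ≤ n ∧ 0 < n ∧
      Adia add acc M (add (copies add a n) x) (add (copies add b n) y)) :
    Adia add acc M a b := by
  obtain ⟨k₀, hk₀⟩ := hMne
  obtain ⟨x, y, hxy⟩ := h
  have mono : ∀ u v w : St, acc u v → acc (add u w) (add v w) :=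
    fun u v w h => (ax4 u v w).mp h
  have key : acc a b := by
    apply ax7
    refine ⟨add x k₀, add y k₀, fun N => ?_⟩
    obtain ⟨n, hn, hpos, k, hk, l, hl, hacc⟩ := hxy N
    refine ⟨n, hn, hpos, ?_⟩
    have h1 : acc (add (add (copies add a n) x) k₀) (add (add (copies add a n) x) k) := by
      have := mono k₀ k (add (copies add a n) x) (hMacc _ hk₀ _ hk)
      rwa [hcomm k₀, hcomm k] at this
    have h2 : acc (add (add (copies add b n) y) l) (add (add (copies add b n) y) k₀) := by
      have := mono l k₀ (add (copies add b n) y) (hMacc _ hl _ hk₀)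
      rwa [hcomm l, hcomm k₀] at this
    have := ax3 _ _ _ (ax3 _ _ _ h1 hacc) h2
    rwa [hassoc, hassoc] at this
  exact ⟨k₀, hk₀, k₀, hk₀, mono a b k₀ key⟩
end

section
/- In a thermodynamic state space with a set M of mechanical states, assume additionally (Ax5a) if a → b and a → c then b → c or c → b, and (Ax8) for every state a there exists k ∈ M with k → a. Then adiabatic accessibility is total: for any two states a, b, either a ≺ b or b ≺ a. -/
/-- Paper's Theorem 2.3: adiabatic accessibility is total. -/
theorem adia_total {St : Type*} (add : St → St → St) (acc : St → St → Prop)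
    (hcomm : ∀ a b, add a b = add b a)
    (hassoc : ∀ a b c, add (add a b) c = add a (add b c))
    (ax2 : ∀ a, acc a a)
    (ax3 : ∀ a b c, acc a b → acc b c → acc a c)
    (ax4 : ∀ a b c, acc a b ↔ acc (add a c) (add b c))
    (ax5a : ∀ a b c, acc a b → acc a c → acc b c ∨ acc c b)
    (M : Set St)
    (hMadd : ∀ k ∈ M, ∀ l ∈ M, add k l ∈ M)
    (hMacc : ∀ k ∈ M, ∀ l ∈ M, acc k l)
    (ax8 : ∀ a : St, ∃ k ∈ M, acc k a)
    (a b : St) :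
    Adia add acc M a b ∨ Adia add acc M b a := by
  obtain ⟨k, hkM, hka⟩ := ax8 a
  obtain ⟨l, hlM, hlb⟩ := ax8 b
  have h1 : acc (add k l) (add a l) := (ax4 k a l).mp hka
  have h2 : acc (add k l) (add b k) := by
    have := (ax4 l b k).mp hlb
    rwa [hcomm l k] at this
  rcases ax5a _ _ _ h1 h2 with h | h
  · exact Or.inl ⟨l, hlM, k, hkM, h⟩
  · exact Or.inr ⟨k, hkM, l, hlM, h⟩
end

section
/- Fix a reference state e and a state a in a thermodynamic state space whose adiabatic accessibility relation ≺ is total, transitive, satisfies a ≺ b ↔ a + c ≺ b + c, and satisfies the scaling property (a ≺ b implies n•a ≺ n•b for every positive integer n). Suppose the positive integers m, n, m', n' are such that: n•a ≺ m•e and m/n is a lower bound for U(a) (i.e. for all positive integers p, q, if q•a ≺ p•e then m/n ≤ p/q); m'•e ≺ n'•a and m'/n' is an upper bound for L(a) (i.e. for all positive integers p, q, if p•e ≺ q•a then p/q ≤ m'/n'); and m'/n' ≤ m/n. Then m/n = m'/n'. -/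
/-- Paper's Theorem 2.4: the minimum of `U(a)` equals the maximum of `L(a)`. -/
theorem min_upper_eq_max_lower {St : Type*} (add : St → St → St) (prec : St → St → Prop)
    (hcomm : ∀ a b, add a b = add b a)
    (hassoc : ∀ a b c, add (add a b) c = add a (add b c))
    (htotal : ∀ a b, prec a b ∨ prec b a)
    (htrans : ∀ a b c, prec a b → prec b c → prec a c)
    (hcancel : ∀ a b c, prec a b ↔ prec (add a c) (add b c))
    (hscale : ∀ a b, prec a b → ∀ n : ℕ, 0 < n → prec (copies add a n) (copies add b n))
    (e a : St) (m n m' n' : ℕ)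
    (hm : 0 < m) (hn : 0 < n) (hm' : 0 < m') (hn' : 0 < n')
    (h1 : prec (copies add a n) (copies add e m))
    (hlb : ∀ p q : ℕ, 0 < p → 0 < q →
      prec (copies add a q) (copies add e p) → (m : ℝ) / n ≤ (p : ℝ) / q)
    (h2 : prec (copies add e m') (copies add a n'))
    (hub : ∀ p q : ℕ, 0 < p → 0 < q →
      prec (copies add e p) (copies add a q) → (p : ℝ) / q ≤ (m' : ℝ) / n')
    (hle : (m' : ℝ) / n' ≤ (m : ℝ) / n) :
    (m : ℝ) / n = (m' : ℝ) / n' := by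
  by_contra hne
  have hlt : (m' : ℝ) / n' < (m : ℝ) / n := lt_of_le_of_ne hle (Ne.symm hne)
  obtain ⟨r, hr1, hr2⟩ := exists_rat_btwn hlt
  have hrpos : (0 : ℝ) < (r : ℝ) := by
    refine lt_trans ?_ hr1
    positivity
  have hrpos' : 0 < r := by exact_mod_cast hrpos
  set p : ℕ := r.num.toNat with hp
  set q : ℕ := r.den with hq
  have hp0 : 0 < p := by
    have := Rat.num_pos.mpr hrpos'
    omega
  have hq0 : 0 < q := r.pos
  have hval : (r : ℝ) = (p : ℝ) / q := by
    rw [Rat.cast_def, hp, hq]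
    congr 1
    rw [← Int.cast_natCast, Int.toNat_of_nonneg (le_of_lt (Rat.num_pos.mpr hrpos'))]
  rcases htotal (copies add a q) (copies add e p) with h | h
  · have := hlb p q hp0 hq0 h
    rw [← hval] at this
    exact absurd hr2 (not_lt.mpr this)
  · have := hub p q hp0 hq0 h
    rw [← hval] at this
    exact absurd hr1 (not_lt.mpr this)
end

section
/- Let a and b be real numbers with 1/2 ≤ a < b < 1. Then there exist no positive integers n and m such that aⁿ = bᵐ and (1−a)ⁿ = (1−b)ᵐ. (Equivalently, for two inequivalent entangled pure states of a 2×d system with largest ordered Schmidt coefficients a and b, there is no reversible deterministic LOCC process between n copies of one and m copies of the other.) -/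
/-- Paper's Theorem 4.2: for `1/2 ≤ a < b < 1` there are no positive integers `n, m`
with `aⁿ = bᵐ` and `(1−a)ⁿ = (1−b)ᵐ`; i.e. no reversible deterministic LOCC process
exists between `n` copies of one `2×d` pure state and `m` copies of an inequivalent one. -/
theorem no_reversible_process_two_by_d (a b : ℝ)
    (ha : 1 / 2 ≤ a) (hab : a < b) (hb : b < 1) :
    ¬ ∃ n m : ℕ, 0 < n ∧ 0 < m ∧ a ^ n = b ^ m ∧ (1 - a) ^ n = (1 - b) ^ m := by
  rintro ⟨n, m, hn, hm, h1, h2⟩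
  have ha0 : 0 < a := lt_of_lt_of_le (by norm_num) ha
  have ha1 : a < 1 := hab.trans hb
  have h1b : 0 < 1 - b := by linarith
  have h1a1 : 1 - a < 1 := by linarith
  -- a^n = b^m > a^m ⇒ n < m
  have hnm : n < m := by
    have : a ^ n > a ^ m := h1 ▸ pow_lt_pow_left₀ hab ha0.le hm.ne'
    exact (pow_lt_pow_iff_right_of_lt_one₀ ha0 ha1).mp this
  -- (1-a)^n = (1-b)^m < (1-a)^m ⇒ m < n
  have hmn : m < n := by
    have : (1 - a) ^ n < (1 - a) ^ m := by
      rw [h2]; exact pow_lt_pow_left₀ (by linarith) h1b.le hm.ne'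
    exact (pow_lt_pow_iff_right_of_lt_one₀ (by linarith) h1a1).mp this
  omega
end

section
/- Let a and b be real numbers with 1/2 < a < b < 1. Then there exist positive integers n and m such that the n-fold tensor power of the ordered probability vector (a, 1−a) and the m-fold tensor power of (b, 1−b) are majorization-incomparable: neither vector is majorized by the other (after padding with zeros to a common length). -/
/-- All pairwise products of entries of two vectors (unsorted). -/
def tensorList (l₁ l₂ : List ℝ) : List ℝ :=
  l₁.flatMap fun x => l₂.map fun y => x * y

/-- `n`-fold tensor product of a vector with itself. -/
def tensorPow (l : List ℝ) : ℕ → List ℝ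
  | 0 => [1]
  | n + 1 => tensorList l (tensorPow l n)

/-- Sum of the first `k` entries (zero padding beyond the length is implicit). -/
def partSum (l : List ℝ) (k : ℕ) : ℝ := (l.take k).sum

/-- `l₁` is majorized by `l₂` (for nonincreasing lists, after zero padding). -/
def MajLe (l₁ l₂ : List ℝ) : Prop := ∀ k : ℕ, partSum l₁ k ≤ partSum l₂ k

lemma tensorList_sum (l₁ l₂ : List ℝ) : (tensorList l₁ l₂).sum = l₁.sum * l₂.sum := by
  induction l₁ with
  | nil => simp [tensorList]
  | cons x t ih =>
    simp [tensorList, List.flatMap_cons, List.sum_append] at ih ⊢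
    rw [ih, List.sum_map_mul_left]
    simp; ring

lemma tensorList_length (l₁ l₂ : List ℝ) :
    (tensorList l₁ l₂).length = l₁.length * l₂.length := by
  induction l₁ with
  | nil => simp [tensorList]
  | cons x t ih =>
    simp only [tensorList, List.flatMap_cons, List.length_append, List.length_map, List.length_cons] at ih ⊢
    rw [ih]; ring

lemma mem_tensorList {e : ℝ} {l₁ l₂ : List ℝ} :
    e ∈ tensorList l₁ l₂ ↔ ∃ p ∈ l₁, ∃ q ∈ l₂, e = p * q := by
  simp [tensorList, eq_comm]

lemma tensorPow_sum (x : ℝ) (n : ℕ) : (tensorPow [x, 1 - x] n).sum = 1 := by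
  induction n with
  | zero => simp [tensorPow]
  | succ n ih => rw [tensorPow, tensorList_sum, ih]; simp

lemma tensorPow_length (x : ℝ) (n : ℕ) : (tensorPow [x, 1 - x] n).length = 2 ^ n := by
  induction n with
  | zero => simp [tensorPow]
  | succ n ih => rw [tensorPow, tensorList_length, ih]; simp [pow_succ]; ring

lemma tensorPow_mem_bounds {x : ℝ} (h0 : 0 ≤ 1 - x) (h1 : 1 - x ≤ x) (n : ℕ) :
    ∀ e ∈ tensorPow [x, 1 - x] n, (1 - x) ^ n ≤ e ∧ e ≤ x ^ n := by
  induction n with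
  | zero => intro e he; simp [tensorPow] at he; simp [he]
  | succ n ih =>
    intro e he
    rw [tensorPow, mem_tensorList] at he
    obtain ⟨p, hp, q, hq, rfl⟩ := he
    obtain ⟨hq1, hq2⟩ := ih q hq
    have hx0 : (0:ℝ) ≤ x := le_trans h0 h1
    have hp1 : 1 - x ≤ p := by simp at hp; rcases hp with rfl | rfl <;> linarith
    have hp2 : p ≤ x := by simp at hp; rcases hp with rfl | rfl <;> linarith
    constructor
    · rw [pow_succ']
      exact mul_le_mul hp1 hq1 (pow_nonneg h0 n) (le_trans h0 hp1)
    · rw [pow_succ']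
      exact mul_le_mul hp2 hq2 (le_trans (pow_nonneg h0 n) hq1) hx0

lemma pow_mem_tensorPow (x : ℝ) (n : ℕ) : x ^ n ∈ tensorPow [x, 1 - x] n := by
  induction n with
  | zero => simp [tensorPow]
  | succ n ih =>
    rw [tensorPow, mem_tensorList]
    exact ⟨x, by simp, x ^ n, ih, by ring⟩

/-- Paper's second Corollary 4.1: for `1/2 < a < b < 1` there are positive integers
`n, m` such that the sorted tensor powers `(a, 1−a)^{⊗n}` and `(b, 1−b)^{⊗m}` are
majorization-incomparable: the set of `2×d` pure states and their tensor products
is only partially ordered. -/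
theorem exists_incomparable_tensor_powers (a b : ℝ)
    (ha : 1 / 2 < a) (hab : a < b) (hb : b < 1) :
    ∃ n m : ℕ, 0 < n ∧ 0 < m ∧
      ∀ γ δ : List ℝ,
        γ.Perm (tensorPow [a, 1 - a] n) → γ.Pairwise (· ≥ ·) →
        δ.Perm (tensorPow [b, 1 - b] m) → δ.Pairwise (· ≥ ·) →
        ¬ MajLe γ δ ∧ ¬ MajLe δ γ := by
  have ha0 : (0:ℝ) < a := by linarith
  have hb0 : (0:ℝ) < b := by linarith
  have hab' : a / b < 1 := (div_lt_one hb0).mpr hab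
  have hab0 : 0 ≤ a / b := le_of_lt (div_pos ha0 hb0)
  obtain ⟨N, hN⟩ := exists_pow_lt_of_lt_one hb0 hab'
  set n := N + 1
  set m := N + 2
  -- a^n < b^m
  have key : a ^ n < b ^ m := by
    have h1 : (a / b) ^ n ≤ (a / b) ^ N := pow_le_pow_of_le_one hab0 (le_of_lt hab') (by omega)
    have h2 : (a / b) ^ n < b := lt_of_le_of_lt h1 hN
    have := mul_lt_mul_of_pos_left h2 (pow_pos hb0 n)
    calc a ^ n = b ^ n * (a / b) ^ n := by
          rw [div_pow]; field_simp
        _ < b ^ n * b := this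
        _ = b ^ m := by rw [← pow_succ]
  refine ⟨n, m, by omega, by omega, ?_⟩
  intro γ δ hγp hγs hδp hδs
  have hγlen : γ.length = 2 ^ n := by rw [hγp.length_eq, tensorPow_length]
  have hδlen : δ.length = 2 ^ m := by rw [hδp.length_eq, tensorPow_length]
  have hγsum : γ.sum = 1 := by rw [hγp.sum_eq, tensorPow_sum]
  have hδsum : δ.sum = 1 := by rw [hδp.sum_eq, tensorPow_sum]
  have hγmem : ∀ e ∈ γ, (1 - a) ^ n ≤ e ∧ e ≤ a ^ n := fun e he =>
    tensorPow_mem_bounds (by linarith) (by linarith) n e (hγp.mem_iff.mp he)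
  have hδmem : ∀ e ∈ δ, (1 - b) ^ m ≤ e ∧ e ≤ b ^ m := fun e he =>
    tensorPow_mem_bounds (by linarith) (by linarith) m e (hδp.mem_iff.mp he)
  -- the key index
  set k : ℕ := 2 ^ m - 1 with hk
  have h2n : 2 ^ n ≤ k := by
    have : 2 ^ n ≤ 2 ^ (m - 1) := Nat.pow_le_pow_right (by norm_num) (by omega)
    have h2 : 2 ^ (m-1) < 2 ^ m := Nat.pow_lt_pow_right (by norm_num) (by omega)
    omega
  have hklt : k < 2 ^ m := by
    have : 1 ≤ 2 ^ m := Nat.one_le_two_pow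
    omega
  -- ¬ MajLe γ δ : at index k
  have h1 : ¬ MajLe γ δ := by
    intro h
    have hγk : partSum γ k = 1 := by
      unfold partSum
      rw [List.take_of_length_le (by omega), hγsum]
    have hdrop : (δ.drop k).length = 1 := by
      rw [List.length_drop, hδlen]; omega
    obtain ⟨y, hy⟩ := List.length_eq_one_iff.mp hdrop
    have hymem : y ∈ δ := (List.drop_sublist k δ).mem (by simp [hy])
    have hy0 : (1 - b) ^ m ≤ y := (hδmem y hymem).1
    have hδk : partSum δ k = 1 - y := by
      have := List.sum_take_add_sum_drop δ k
      rw [hy, hδsum] at this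
      unfold partSum
      simp at this
      linarith
    have hbpos : (0:ℝ) < (1 - b) ^ m := pow_pos (by linarith) m
    have := h k
    rw [hγk, hδk] at this
    linarith
  -- ¬ MajLe δ γ : at index 1
  have h2 : ¬ MajLe δ γ := by
    intro h
    have h2npos : (0:ℕ) < 2 ^ n := Nat.pow_pos (by norm_num)
    have h2mpos : (0:ℕ) < 2 ^ m := Nat.pow_pos (by norm_num)
    have hγne : γ ≠ [] := by
      intro hnil; rw [hnil] at hγlen; simp at hγlen; omega
    have hδne : δ ≠ [] := by
      intro hnil; rw [hnil] at hδlen; simp at hδlen; omega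
    obtain ⟨g, γt, rfl⟩ := List.exists_cons_of_ne_nil hγne
    obtain ⟨d, δt, rfl⟩ := List.exists_cons_of_ne_nil hδne
    have hg : g ≤ a ^ n := (hγmem g (by simp)).2
    -- head of δ is ≥ b^m since b^m ∈ δ and δ sorted
    have hbm : b ^ m ∈ d :: δt := hδp.mem_iff.mpr (pow_mem_tensorPow b m)
    have hd : b ^ m ≤ d := by
      rcases List.mem_cons.mp hbm with h' | h'
      · exact le_of_eq h'
      · exact List.rel_of_pairwise_cons hδs h'
    have := h 1
    unfold partSum at this
    simp at this
    linarith
  exact ⟨h1, h2⟩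
end

section
/- Let (a₁, a₂), (a₁', a₂') and (b₁, b₂) be ordered probability vectors of length 2 (so a₁ ≥ a₂ ≥ 0, a₁ + a₂ = 1, and similarly for the others). Then the sorted 4-entry product vector (a₁, a₂) ⊗ (b₁, b₂) is majorized by (a₁', a₂') ⊗ (b₁, b₂) if and only if a₁ ≤ a₁'. (Equivalently, for pure states of 2-dimensional Schmidt rank, φ₁ ⊗ ψ → φ₂ ⊗ ψ under deterministic LOCC if and only if φ₁ → φ₂.) -/
lemma majle_four (x1 x2 x3 x4 y1 y2 y3 y4 : ℝ)
    (h1 : x1 ≤ y1) (h2 : x1 + x2 ≤ y1 + y2) (h3 : x1 + x2 + x3 ≤ y1 + y2 + y3)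
    (h4 : x1 + x2 + x3 + x4 ≤ y1 + y2 + y3 + y4) :
    MajLe [x1, x2, x3, x4] [y1, y2, y3, y4] := by
  intro k
  match k with
  | 0 => simp [partSum]
  | 1 => simpa [partSum] using h1
  | 2 => simp only [partSum, List.take, List.sum_cons, List.sum_nil]; linarith
  | 3 => simp only [partSum, List.take, List.sum_cons, List.sum_nil]; linarith
  | (n+4) => simp only [partSum, List.take, List.sum_cons, List.sum_nil]; linarith

lemma sorted_four {x1 x2 x3 x4 : ℝ} (h1 : x2 ≤ x1) (h2 : x3 ≤ x2) (h3 : x4 ≤ x3) :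
    List.Pairwise (· ≥ ·) [x1, x2, x3, x4] := by
  simp [List.pairwise_cons]
  exact ⟨⟨h1, le_trans h2 h1, le_trans h3 (le_trans h2 h1)⟩, ⟨h2, le_trans h3 h2⟩, h3⟩

lemma swap_mid (x1 x2 x3 x4 : ℝ) : List.Perm [x1, x2, x3, x4] [x1, x3, x2, x4] :=
  List.Perm.cons x1 (List.Perm.swap x3 x2 [x4])

set_option maxHeartbeats 2000000 in
/-- Paper's verification of Axiom 4 for `2×d` systems: the sorted product vector
`(a₁, a₂) ⊗ (b₁, b₂)` is majorized by `(a₁', a₂') ⊗ (b₁, b₂)` if and only if `a₁ ≤ a₁'`.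
(For pure states of Schmidt rank 2, `φ₁ ⊗ ψ → φ₂ ⊗ ψ` under deterministic LOCC iff
`φ₁ → φ₂`.) -/
theorem tensor_majorized_iff (a₁ a₂ a₁' a₂' b₁ b₂ : ℝ)
    (ha : a₂ ≤ a₁) (ha2 : 0 ≤ a₂) (hasum : a₁ + a₂ = 1)
    (ha' : a₂' ≤ a₁') (ha2' : 0 ≤ a₂') (hasum' : a₁' + a₂' = 1)
    (hb : b₂ ≤ b₁) (hb2 : 0 ≤ b₂) (hbsum : b₁ + b₂ = 1) :
    ∀ γ δ : List ℝ,
      γ.Perm (tensorList [a₁, a₂] [b₁, b₂]) → γ.Pairwise (· ≥ ·) →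
      δ.Perm (tensorList [a₁', a₂'] [b₁, b₂]) → δ.Pairwise (· ≥ ·) →
      (MajLe γ δ ↔ a₁ ≤ a₁') := by
  intro γ δ hγp hγs hδp hδs
  have ha1 : 0 ≤ a₁ := le_trans ha2 ha
  have ha1' : 0 ≤ a₁' := le_trans ha2' ha'
  have hb1 : (1:ℝ)/2 ≤ b₁ := by linarith
  have htL : tensorList [a₁, a₂] [b₁, b₂] = [a₁*b₁, a₁*b₂, a₂*b₁, a₂*b₂] := by
    simp [tensorList]
  have htL' : tensorList [a₁', a₂'] [b₁, b₂] = [a₁'*b₁, a₁'*b₂, a₂'*b₁, a₂'*b₂] := by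
    simp [tensorList]
  rw [htL] at hγp; rw [htL'] at hδp
  rcases le_total (a₂*b₁) (a₁*b₂) with hg | hg
  case' inl =>
    have hγe : γ = [a₁*b₁, a₁*b₂, a₂*b₁, a₂*b₂] :=
      List.Perm.eq_of_pairwise' hγs
        (sorted_four (mul_le_mul_of_nonneg_left hb ha1) hg
          (mul_le_mul_of_nonneg_left hb ha2)) hγp
  case' inr =>
    have hγe : γ = [a₁*b₁, a₂*b₁, a₁*b₂, a₂*b₂] :=
      List.Perm.eq_of_pairwise' hγs
        (sorted_four (mul_le_mul_of_nonneg_right ha (le_trans hb2 hb)) hg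
          (mul_le_mul_of_nonneg_right ha hb2)) (hγp.trans (swap_mid _ _ _ _))
  all_goals rcases le_total (a₂'*b₁) (a₁'*b₂) with hd | hd
  case' inl.inl | inr.inl =>
    have hδe : δ = [a₁'*b₁, a₁'*b₂, a₂'*b₁, a₂'*b₂] :=
      List.Perm.eq_of_pairwise' hδs
        (sorted_four (mul_le_mul_of_nonneg_left hb ha1') hd
          (mul_le_mul_of_nonneg_left hb ha2')) hδp
  case' inl.inr | inr.inr =>
    have hδe : δ = [a₁'*b₁, a₂'*b₁, a₁'*b₂, a₂'*b₂] :=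
      List.Perm.eq_of_pairwise' hδs
        (sorted_four (mul_le_mul_of_nonneg_right ha' (le_trans hb2 hb)) hd
          (mul_le_mul_of_nonneg_right ha' hb2)) (hδp.trans (swap_mid _ _ _ _))
  all_goals subst hγe hδe
  all_goals constructor
  case' inl.inl.mp | inl.inr.mp | inr.inl.mp | inr.inr.mp =>
    intro hmaj
    have h1 := hmaj 1
    simp only [partSum, List.take, List.sum_cons, List.sum_nil] at h1
    nlinarith
  all_goals intro hle
  all_goals apply majle_four
  all_goals nlinarith [mul_le_mul_of_nonneg_right hle (le_trans hb2 hb),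
    mul_le_mul_of_nonneg_right (show a₂' ≤ a₂ by linarith) hb2,
    mul_le_mul_of_nonneg_right hle hb2,
    mul_le_mul_of_nonneg_right (show a₂' ≤ a₂ by linarith) (le_trans hb2 hb)]
end

section
/- Consider the ordered probability vectors α = (0.4, 0.4, 0.1, 0.1), β = (0.5, 0.25, 0.25) and η = (0.6, 0.4). Then: (i) neither α is majorized by β nor β by α (after padding β with a zero to length 4); but (ii) the sorted 8-entry product vector α ⊗ η = (0.24, 0.24, 0.16, 0.16, 0.06, 0.06, 0.04, 0.04) is majorized by the sorted product vector β ⊗ η = (0.3, 0.2, 0.15, 0.15, 0.1, 0.1) padded with zeros. (Equivalently, the states ψ₁ = √0.4|00⟩+√0.4|11⟩+√0.1|22⟩+√0.1|33⟩ and ψ₂ = √0.5|00⟩+√0.25|11⟩+√0.25|22⟩ are LOCC-incomparable, yet the catalytic transformation ψ₁ ⊗ η → ψ₂ ⊗ η with η = √0.6|00⟩+√0.4|11⟩ is deterministically possible, violating Axiom 4 for general pure states.) -/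
private lemma perm4 (a b : ℝ) : [a, a, b, b].Perm [a, b, a, b] :=
  List.Perm.cons a ((List.Perm.swap a b [b]).symm)

/-- The Jonathan–Plenio catalysis example (Eqs. (4.11)–(4.13) of the paper):
`α = (0.4, 0.4, 0.1, 0.1)` and `β = (0.5, 0.25, 0.25)` are majorization-incomparable,
yet with the catalyst `η = (0.6, 0.4)` the sorted product vector `α ⊗ η` is majorized
by the sorted product vector `β ⊗ η`. -/
theorem catalysis_example :
    (¬ MajLe [(0.4 : ℝ), 0.4, 0.1, 0.1] [(0.5 : ℝ), 0.25, 0.25] ∧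
     ¬ MajLe [(0.5 : ℝ), 0.25, 0.25] [(0.4 : ℝ), 0.4, 0.1, 0.1]) ∧
    ([(0.24 : ℝ), 0.24, 0.16, 0.16, 0.06, 0.06, 0.04, 0.04].Perm
        (tensorList [(0.4 : ℝ), 0.4, 0.1, 0.1] [(0.6 : ℝ), 0.4]) ∧
     [(0.24 : ℝ), 0.24, 0.16, 0.16, 0.06, 0.06, 0.04, 0.04].Pairwise (· ≥ ·) ∧
     [(0.3 : ℝ), 0.2, 0.15, 0.15, 0.1, 0.1].Perm
        (tensorList [(0.5 : ℝ), 0.25, 0.25] [(0.6 : ℝ), 0.4]) ∧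
     [(0.3 : ℝ), 0.2, 0.15, 0.15, 0.1, 0.1].Pairwise (· ≥ ·) ∧
     MajLe [(0.24 : ℝ), 0.24, 0.16, 0.16, 0.06, 0.06, 0.04, 0.04]
           [(0.3 : ℝ), 0.2, 0.15, 0.15, 0.1, 0.1]) := by
  refine ⟨⟨fun h => ?_, fun h => ?_⟩, ?_, ?_, ?_, ?_, ?_⟩
  · have := h 2
    simp [partSum, List.take, MajLe] at this
    norm_num at this
  · have := h 1
    simp [partSum, List.take, MajLe] at this
    norm_num at this
  · have h1 : tensorList [(0.4 : ℝ), 0.4, 0.1, 0.1] [(0.6 : ℝ), 0.4]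
        = [0.24, 0.16, 0.24, 0.16, 0.06, 0.04, 0.06, 0.04] := by
      simp [tensorList]; norm_num
    rw [h1]
    have : ([(0.24 : ℝ), 0.24, 0.16, 0.16] ++ [0.06, 0.06, 0.04, 0.04]).Perm
        ([0.24, 0.16, 0.24, 0.16] ++ [0.06, 0.04, 0.06, 0.04]) :=
      (perm4 0.24 0.16).append (perm4 0.06 0.04)
    simpa using this
  · norm_num [List.pairwise_cons]
  · have h1 : tensorList [(0.5 : ℝ), 0.25, 0.25] [(0.6 : ℝ), 0.4]
        = [0.3, 0.2, 0.15, 0.1, 0.15, 0.1] := by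
      simp [tensorList]; norm_num
    rw [h1]
    exact .cons 0.3 (.cons 0.2 (.cons 0.15 ((List.Perm.swap 0.15 0.1 [0.1]).symm)))
  · norm_num [List.pairwise_cons]
  · intro k
    match k with
    | 0 => simp [partSum]
    | 1 => simp only [partSum, List.take]; norm_num
    | 2 => simp only [partSum, List.take]; norm_num
    | 3 => simp only [partSum, List.take]; norm_num
    | 4 => simp only [partSum, List.take]; norm_num
    | 5 => simp only [partSum, List.take]; norm_num
    | 6 => simp only [partSum, List.take]; norm_num
    | 7 => simp only [partSum, List.take]; norm_num
    | (n+8) =>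
      have h1 : partSum [(0.24 : ℝ), 0.24, 0.16, 0.16, 0.06, 0.06, 0.04, 0.04] (n+8) = 1 := by
        rw [partSum, List.take_of_length_le (by simp)]; norm_num
      have h2 : partSum [(0.3 : ℝ), 0.2, 0.15, 0.15, 0.1, 0.1] (n+8) = 1 := by
        rw [partSum, List.take_of_length_le (by simp)]; norm_num
      rw [h1, h2]
end
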